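/- Assume additionally ρ(P) < 1. Then there exists f ∈ ℝ^S with f ≥ 0, f ≠ 0, fᵀ B = ρ(B)·fᵀ (f is a nonnegative left eigenvector of B for the eigenvalue ρ(B)), and fᵀ b > 0. -/

import Mathlib

set_option linter.unusedSectionVars false
set_option linter.unusedRCasesPattern false
set_option maxHeartbeats 1000000

open Matrix Filter Topology
open scoped ENNReal NNReal

/-- Spectral radius of a real square matrix: the maximum modulus of its complex eigenvalues. -/
noncomputable def specRad {S : Type*} [Fintype S] [DecidableEq S] (M : Matrix S S ℝ) : ℝ :=
  sSup ((fun z : ℂ => ‖z‖) '' spectrum ℂ (M.map Complex.ofReal))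

section Neumann


variable {𝕜 A : Type*} [NormedField 𝕜] [NormedRing A] [NormedAlgebra 𝕜 A] [CompleteSpace A]

lemma zmul_c {a : A} {z : 𝕜} (hz : z ≠ 0) (n : ℕ) :
    z • ((z⁻¹) ^ (n + 1) • a ^ n) = (z⁻¹) ^ n • a ^ n := by
  rw [smul_smul, pow_succ', ← mul_assoc, mul_inv_cancel₀ hz, one_mul]

lemma neumann {a : A} {z : 𝕜} (hz : z ≠ 0)
    (hs : Summable fun n : ℕ => (z⁻¹) ^ (n + 1) • a ^ n) :
    (z • (1 : A) - a) * (∑' n : ℕ, (z⁻¹) ^ (n + 1) • a ^ n) = 1 ∧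
    (∑' n : ℕ, (z⁻¹) ^ (n + 1) • a ^ n) * (z • (1 : A) - a) = 1 := by
  set c : ℕ → A := fun n => (z⁻¹) ^ (n + 1) • a ^ n with hc
  set d : ℕ → A := fun n => (z⁻¹) ^ n • a ^ n with hd
  have hdz : Tendsto d atTop (𝓝 0) := by
    have h1 : Tendsto (fun n => z • c n) atTop (𝓝 (z • (0 : A))) :=
      hs.tendsto_atTop_zero.const_smul z
    rw [smul_zero] at h1
    exact h1.congr fun n => zmul_c hz n
  have hd0 : d 0 = 1 := by simp [hd]
  have hkey_l : ∀ n, (z • (1 : A) - a) * c n = d n - d (n + 1) := by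
    intro n
    rw [sub_mul, smul_mul_assoc, one_mul, zmul_c hz]
    congr 1
    rw [hc, hd]
    simp only [mul_smul_comm]
    rw [← pow_succ']
  have hkey_r : ∀ n, c n * (z • (1 : A) - a) = d n - d (n + 1) := by
    intro n
    rw [mul_sub, mul_smul_comm, mul_one, zmul_c hz]
    congr 1
    rw [hc, hd]
    simp only [smul_mul_assoc]
    rw [← pow_succ]
  have htel : ∀ (f : ℕ → A), (∀ n, f n = d n - d (n + 1)) → Summable f → HasSum f 1 := by
    intro f hf hsf
    rw [hsf.hasSum_iff_tendsto_nat]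
    have : ∀ N : ℕ, ∑ i ∈ Finset.range N, f i = d 0 - d N := by
      intro N
      simp only [hf]
      exact Finset.sum_range_sub' d N
    simp only [this, hd0]
    simpa using (tendsto_const_nhds (x := (1 : A)) (f := atTop)).sub hdz
  constructor
  · have h1 : HasSum (fun n => (z • (1 : A) - a) * c n) ((z • (1 : A) - a) * ∑' n, c n) :=
      hs.hasSum.mul_left _
    have h2 : HasSum (fun n => (z • (1 : A) - a) * c n) 1 :=
      htel _ hkey_l (hs.mul_left _)
    exact h1.unique h2
  · have h1 : HasSum (fun n => c n * (z • (1 : A) - a)) ((∑' n, c n) * (z • (1 : A) - a)) :=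
      hs.hasSum.mul_right _
    have h2 : HasSum (fun n => c n * (z • (1 : A) - a)) 1 :=
      htel _ hkey_r (hs.mul_right _)
    exact h1.unique h2

lemma resolvent_lower_bound {A : Type*} [NormedRing A] [NormedAlgebra ℂ A] [CompleteSpace A]
    (a : A) {z lam : ℂ} (hlam : lam ∈ spectrum ℂ a) {R : A}
    (h1 : (z • (1 : A) - a) * R = 1) (h2 : R * (z • (1 : A) - a) = 1) :
    1 ≤ ‖z - lam‖ * ‖R‖ := by
  by_contra hcon
  push_neg at hcon
  have hnorm : ‖(z - lam) • R‖ < 1 := by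
    rw [norm_smul]
    simpa using hcon
  have hu1 : IsUnit ((1 : A) - (z - lam) • R) := isUnit_one_sub_of_norm_lt_one hnorm
  have hu2 : IsUnit (z • (1 : A) - a) := ⟨⟨z • (1 : A) - a, R, h1, h2⟩, rfl⟩
  have heq : lam • (1 : A) - a = (z • (1 : A) - a) * ((1 : A) - (z - lam) • R) := by
    rw [mul_sub, mul_one, mul_smul_comm, h1]
    rw [sub_smul]
    abel
  have : IsUnit (lam • (1 : A) - a) := heq ▸ hu2.mul hu1
  rw [spectrum.mem_iff] at hlam
  exact hlam (by rwa [Algebra.algebraMap_eq_smul_one])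

end Neumann

section Aux

attribute [local instance] Matrix.linftyOpNormedAddCommGroup Matrix.linftyOpNormedSpace
  Matrix.linftyOpNormedRing Matrix.linftyOpNormedAlgebra

variable {S : Type*} [Fintype S] [DecidableEq S] [Nonempty S]


-- entry bound for linfty norm
lemma entry_nnnorm_le {𝕜 : Type*} [NormedRing 𝕜] (A : Matrix S S 𝕜) (i j : S) :
    ‖A i j‖₊ ≤ ‖A‖₊ := by
  rw [Matrix.linfty_opNNNorm_def]
  calc ‖A i j‖₊ ≤ ∑ k, ‖A i k‖₊ := Finset.single_le_sum (f := fun k => ‖A i k‖₊) (fun _ _ => zero_le) (Finset.mem_univ j)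
  _ ≤ _ := Finset.le_sup (f := fun i => ∑ k, ‖A i k‖₊) (Finset.mem_univ i)

lemma entry_norm_le {𝕜 : Type*} [NormedRing 𝕜] (A : Matrix S S 𝕜) (i j : S) :
    ‖A i j‖ ≤ ‖A‖ := entry_nnnorm_le A i j

lemma norm_map_ofReal (A : Matrix S S ℝ) : ‖A.map (Complex.ofReal)‖ = ‖A‖ := by
  have : ‖A.map (Complex.ofReal)‖₊ = ‖A‖₊ := by
    rw [Matrix.linfty_opNNNorm_def, Matrix.linfty_opNNNorm_def]
    congr 1 with i
    congr 1 with j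
    simp [Matrix.map_apply]
  simpa [← coe_nnnorm] using congrArg NNReal.toReal this



lemma hasSum_entry {𝕜 : Type*} [RCLike 𝕜] {c : ℕ → Matrix S S 𝕜} {R : Matrix S S 𝕜}
    (h : HasSum c R) (i j : S) : HasSum (fun n => c n i j) (R i j) := by
  let L : Matrix S S 𝕜 →ₗ[𝕜] 𝕜 :=
    { toFun := fun A => A i j, map_add' := fun _ _ => rfl, map_smul' := fun _ _ => rfl }
  exact h.map L.toAddMonoidHom L.continuous_of_finiteDimensional

lemma pow_entry_nonneg {B : Matrix S S ℝ} (hB : ∀ i j, 0 ≤ B i j) (n : ℕ) (i j : S) :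
    0 ≤ (B ^ n) i j := by
  induction n generalizing i j with
  | zero => by_cases h : i = j <;> simp [h, Matrix.one_apply]
  | succ n ih =>
    rw [pow_succ, Matrix.mul_apply]
    exact Finset.sum_nonneg fun k _ => mul_nonneg (ih i k) (hB k j)

lemma norm_le_total {𝕜 : Type*} [NormedRing 𝕜] (A : Matrix S S 𝕜) :
    ‖A‖ ≤ ∑ i, ∑ j, ‖A i j‖ := by
  have h : ‖A‖₊ ≤ ∑ i, ∑ j, ‖A i j‖₊ := by
    rw [Matrix.linfty_opNNNorm_def]
    apply Finset.sup_le
    intro i _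
    exact Finset.single_le_sum (f := fun i => ∑ j, ‖A i j‖₊)
      (fun _ _ => zero_le) (Finset.mem_univ i)
  have := NNReal.coe_le_coe.mpr h
  simpa [← coe_nnnorm, NNReal.coe_sum] using this



lemma summable_res {t r : ℝ} (ht0 : 0 < t) (hr0 : 0 ≤ r) (hrt : r < t)
    {𝕜 : Type*} [RCLike 𝕜] (a : Matrix S S 𝕜) (hev : ∀ᶠ n : ℕ in atTop, ‖a ^ n‖ ≤ r ^ n)
    {z : 𝕜} (hz : ‖z‖ = t) :
    Summable fun n : ℕ => (z⁻¹) ^ (n + 1) • a ^ n := by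
  apply Summable.of_norm_bounded_eventually_nat (g := fun n => t⁻¹ * (r / t) ^ n)
  · exact (summable_geometric_of_lt_one (by positivity) (by rwa [div_lt_one ht0])).mul_left _
  · filter_upwards [hev] with n hn
    rw [norm_smul, norm_pow, norm_inv, hz]
    calc t⁻¹ ^ (n + 1) * ‖a ^ n‖ ≤ t⁻¹ ^ (n + 1) * r ^ n :=
          mul_le_mul_of_nonneg_left hn (by positivity)
    _ = t⁻¹ * (r / t) ^ n := by
          rw [div_pow, pow_succ', inv_pow]
          field_simp



lemma specRad_isGreatest (M : Matrix S S ℝ) :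
    IsGreatest ((fun z : ℂ => ‖z‖) '' spectrum ℂ (M.map Complex.ofReal)) (specRad M) := by
  have hc : IsCompact (spectrum ℂ (M.map Complex.ofReal)) := spectrum.isCompact _
  have hne : (spectrum ℂ (M.map Complex.ofReal)).Nonempty := spectrum.nonempty _
  have himg : IsCompact ((fun z : ℂ => ‖z‖) '' spectrum ℂ (M.map Complex.ofReal)) :=
    hc.image continuous_norm
  have hne' := hne.image (fun z : ℂ => ‖z‖)
  exact ⟨himg.sSup_mem hne', fun x hx => le_csSup himg.bddAbove hx⟩

lemma specRad_nonneg (M : Matrix S S ℝ) : 0 ≤ specRad M := by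
  obtain ⟨⟨z, hz, hz'⟩, -⟩ := specRad_isGreatest M
  rw [← hz']; positivity

lemma exists_spec_eq (M : Matrix S S ℝ) :
    ∃ z ∈ spectrum ℂ (M.map Complex.ofReal), ‖z‖ = specRad M := by
  obtain ⟨⟨z, hz, hz'⟩, -⟩ := specRad_isGreatest M
  exact ⟨z, hz, hz'⟩

lemma spec_abs_le {M : Matrix S S ℝ} {z : ℂ} (hz : z ∈ spectrum ℂ (M.map Complex.ofReal)) :
    ‖z‖ ≤ specRad M :=
  (specRad_isGreatest M).2 ⟨z, hz, rfl⟩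

lemma spectralRadius_eq (M : Matrix S S ℝ) :
    spectralRadius ℂ (M.map Complex.ofReal) = ENNReal.ofReal (specRad M) := by
  obtain ⟨z0, hz0, hz0'⟩ := spectrum.exists_nnnorm_eq_spectralRadius (M.map Complex.ofReal)
  obtain ⟨z1, hz1, hz1'⟩ := exists_spec_eq M
  have h1 : ‖z0‖ ≤ specRad M := spec_abs_le hz0
  have h2 : (‖z1‖₊ : ℝ≥0∞) ≤ spectralRadius ℂ (M.map Complex.ofReal) := by
    rw [spectralRadius]
    exact le_iSup₂ (f := fun k (_ : k ∈ spectrum ℂ (M.map Complex.ofReal)) => (‖k‖₊ : ℝ≥0∞)) z1 hz1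
  have e0 : (‖z0‖₊ : ℝ≥0∞) = ENNReal.ofReal ‖z0‖ := by
    rw [ofReal_norm, enorm_eq_nnnorm]
  have e1 : (‖z1‖₊ : ℝ≥0∞) = ENNReal.ofReal ‖z1‖ := by
    rw [ofReal_norm, enorm_eq_nnnorm]
  rw [← hz0', e0]
  apply le_antisymm
  · exact ENNReal.ofReal_le_ofReal h1
  · rw [← hz1']
    calc ENNReal.ofReal ‖z1‖ = (‖z1‖₊ : ℝ≥0∞) := e1.symm
    _ ≤ _ := h2.trans_eq (by rw [← hz0', e0])



attribute [local instance] Matrix.linftyOpNormedAddCommGroup Matrix.linftyOpNormedSpace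
  Matrix.linftyOpNormedRing Matrix.linftyOpNormedAlgebra

variable {S : Type*} [Fintype S] [DecidableEq S] [Nonempty S]





lemma map_ofReal_pow (M : Matrix S S ℝ) (n : ℕ) :
    (M.map Complex.ofReal) ^ n = (M ^ n).map Complex.ofReal := by
  have := map_pow (Complex.ofRealHom.mapMatrix) M n
  exact this.symm

lemma specRad_eventually_norm_pow_le (M : Matrix S S ℝ) {r : ℝ} (hr : specRad M < r) :
    ∀ᶠ n : ℕ in atTop, ‖M ^ n‖ ≤ r ^ n := by
  have hr0 : 0 < r := lt_of_le_of_lt (specRad_nonneg M) hr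
  have h := spectrum.pow_nnnorm_pow_one_div_tendsto_nhds_spectralRadius (M.map Complex.ofReal)
  rw [spectralRadius_eq M] at h
  have hlt : ENNReal.ofReal (specRad M) < ENNReal.ofReal r :=
    (ENNReal.ofReal_lt_ofReal_iff hr0).mpr hr
  have hev : ∀ᶠ n : ℕ in atTop,
      (‖(M.map Complex.ofReal) ^ n‖₊ : ℝ≥0∞) ^ (1 / (n : ℝ)) < ENNReal.ofReal r :=
    h.eventually_lt_const hlt
  filter_upwards [hev, eventually_ge_atTop 1] with n hn hn1
  have hne : (n : ℝ) ≠ 0 := by positivity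
  have hx : (‖(M.map Complex.ofReal) ^ n‖₊ : ℝ≥0∞) ≤ ENNReal.ofReal (r ^ n) := by
    have h1 : ((‖(M.map Complex.ofReal) ^ n‖₊ : ℝ≥0∞) ^ (1 / (n : ℝ))) ^ (n : ℝ)
        ≤ (ENNReal.ofReal r) ^ (n : ℝ) :=
      ENNReal.rpow_le_rpow hn.le (by positivity)
    rw [← ENNReal.rpow_mul, one_div, inv_mul_cancel₀ hne, ENNReal.rpow_one,
      ENNReal.ofReal_rpow_of_pos hr0, Real.rpow_natCast] at h1
    exact h1
  rw [← enorm_eq_nnnorm, ← ofReal_norm] at hx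
  have := (ENNReal.ofReal_le_ofReal_iff (by positivity)).mp hx
  rwa [map_ofReal_pow, norm_map_ofReal] at this

lemma row_sum_abs_le_norm (A : Matrix S S ℝ) (i : S) : ∑ j, |A i j| ≤ ‖A‖ := by
  have h : (∑ j, ‖A i j‖₊) ≤ ‖A‖₊ := by
    rw [Matrix.linfty_opNNNorm_def]
    exact Finset.le_sup (f := fun i => ∑ k, ‖A i k‖₊) (Finset.mem_univ i)
  have := NNReal.coe_le_coe.mpr h
  simpa [Real.norm_eq_abs, NNReal.coe_sum] using this


lemma key_resolvent (B : Matrix S S ℝ) (hB : ∀ i j, 0 ≤ B i j) {t : ℝ}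
    (ht : specRad B < t) :
    ∃ R : Matrix S S ℝ, (∀ i j, 0 ≤ R i j) ∧ R * (t • (1 : Matrix S S ℝ) - B) = 1 ∧
      (0 < specRad B → 1 / (t - specRad B) ≤ ∑ i, ∑ j, R i j) := by
  set ρ := specRad B with hρdef
  have hρ0 : 0 ≤ ρ := specRad_nonneg B
  have ht0 : 0 < t := lt_of_le_of_lt hρ0 ht
  set r : ℝ := (ρ + t) / 2 with hrdef
  have hρr : ρ < r := by rw [hrdef]; linarith
  have hrt : r < t := by rw [hrdef]; linarith
  have hr0 : 0 ≤ r := le_of_lt (lt_of_le_of_lt hρ0 hρr)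
  have hevR : ∀ᶠ n : ℕ in atTop, ‖B ^ n‖ ≤ r ^ n := specRad_eventually_norm_pow_le B hρr
  have hzR : ‖(t : ℝ)‖ = t := by rw [Real.norm_eq_abs, abs_of_pos ht0]
  have hsR : Summable fun n : ℕ => ((t : ℝ)⁻¹) ^ (n + 1) • B ^ n :=
    summable_res ht0 hr0 hrt B hevR hzR
  set R : Matrix S S ℝ := ∑' n : ℕ, ((t : ℝ)⁻¹) ^ (n + 1) • B ^ n with hRdef
  have hRentry : ∀ i j, HasSum (fun n : ℕ => (t⁻¹) ^ (n + 1) * (B ^ n) i j) (R i j) := by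
    intro i j
    have h := hasSum_entry hsR.hasSum i j
    rw [← hRdef] at h
    simpa [Matrix.smul_apply, smul_eq_mul] using h
  have hRnn : ∀ i j, 0 ≤ R i j := by
    intro i j
    refine hasSum_le (fun n => ?_) hasSum_zero (hRentry i j)
    exact mul_nonneg (by positivity) (pow_entry_nonneg hB n i j)
  have hneu := neumann (z := (t : ℝ)) (a := B) (ne_of_gt ht0) hsR
  refine ⟨R, hRnn, hneu.2, ?_⟩
  intro hρpos
  -- complex resolvent blow-up
  obtain ⟨lam, hlam, hlamabs⟩ := exists_spec_eq B
  set a : Matrix S S ℂ := B.map Complex.ofReal with hadef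
  set z : ℂ := ((t / ρ : ℝ) : ℂ) * lam with hzdef
  have habsz : ‖z‖ = t := by
    rw [hzdef, norm_mul, Complex.norm_real, Real.norm_eq_abs,
      abs_of_pos (by positivity), hlamabs, ← hρdef]
    field_simp
  have hevC : ∀ᶠ n : ℕ in atTop, ‖a ^ n‖ ≤ r ^ n := by
    filter_upwards [hevR] with n hn
    rwa [hadef, map_ofReal_pow, norm_map_ofReal]
  have hsC : Summable fun n : ℕ => (z⁻¹) ^ (n + 1) • a ^ n :=
    summable_res ht0 hr0 hrt a hevC habsz
  set RC : Matrix S S ℂ := ∑' n : ℕ, (z⁻¹) ^ (n + 1) • a ^ n with hRCdef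
  have hz0 : z ≠ 0 := by
    intro h; rw [h] at habsz; simp at habsz; exact (ne_of_gt ht0) habsz.symm
  have hneuC := neumann (z := z) (a := a) hz0 hsC
  have hlow : 1 ≤ ‖z - lam‖ * ‖RC‖ :=
    resolvent_lower_bound a hlam hneuC.1 hneuC.2
  have habsd : ‖z - lam‖ = t - ρ := by
    have h1 : z - lam = ((t / ρ - 1 : ℝ) : ℂ) * lam := by
      rw [hzdef]; push_cast; ring
    have h2 : (0 : ℝ) < t / ρ - 1 := by
      rw [sub_pos, lt_div_iff₀ hρpos]; linarith
    rw [h1, norm_mul, Complex.norm_real, Real.norm_eq_abs, hlamabs, ← hρdef, abs_of_pos h2]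
    field_simp
  -- entry domination
  have hdom : ∀ i j, ‖RC i j‖ ≤ R i j := by
    intro i j
    have hCentry : ∀ n : ℕ, ((z⁻¹) ^ (n + 1) • a ^ n) i j
        = (z⁻¹) ^ (n + 1) * (((B ^ n) i j : ℝ) : ℂ) := by
      intro n
      rw [Matrix.smul_apply, smul_eq_mul, hadef, map_ofReal_pow, Matrix.map_apply]
    have hnorme : ∀ n : ℕ, ‖((z⁻¹) ^ (n + 1) • a ^ n) i j‖
        = (t⁻¹) ^ (n + 1) * (B ^ n) i j := by
      intro n
      rw [hCentry n, norm_mul, norm_pow, norm_inv, habsz, Complex.norm_real,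
        Real.norm_eq_abs, abs_of_nonneg (pow_entry_nonneg hB n i j)]
    have hsumnorm : Summable fun n : ℕ => ‖((z⁻¹) ^ (n + 1) • a ^ n) i j‖ := by
      apply Summable.congr (hRentry i j).summable
      intro n; rw [hnorme n]
    have h1 : RC i j = ∑' n : ℕ, ((z⁻¹) ^ (n + 1) • a ^ n) i j :=
      (hasSum_entry hsC.hasSum i j).tsum_eq.symm
    rw [h1]
    calc ‖∑' n : ℕ, ((z⁻¹) ^ (n + 1) • a ^ n) i j‖
        ≤ ∑' n : ℕ, ‖((z⁻¹) ^ (n + 1) • a ^ n) i j‖ := norm_tsum_le_tsum_norm hsumnorm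
    _ = ∑' n : ℕ, (t⁻¹) ^ (n + 1) * (B ^ n) i j := by
          apply tsum_congr; intro n; rw [hnorme n]
    _ = R i j := (hRentry i j).tsum_eq
  have hnormle : ‖RC‖ ≤ ∑ i, ∑ j, R i j := by
    calc ‖RC‖ ≤ ∑ i, ∑ j, ‖RC i j‖ := norm_le_total RC
    _ ≤ ∑ i, ∑ j, R i j := by
          apply Finset.sum_le_sum; intro i _
          apply Finset.sum_le_sum; intro j _
          exact hdom i j
  have htρ : 0 < t - ρ := by linarith
  rw [habsd] at hlow
  calc 1 / (t - ρ) ≤ ‖RC‖ := by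
        rw [div_le_iff₀ htρ]
        linarith [hlow, mul_comm (t - ρ) ‖RC‖]
  _ ≤ ∑ i, ∑ j, R i j := hnormle

lemma scalar_eq_smul_one (x : ℂ) :
    Matrix.scalar S x = x • (1 : Matrix S S ℂ) := by
  ext i j
  by_cases h : i = j <;>
    simp [h, Matrix.scalar_apply, Matrix.one_apply, Matrix.diagonal, Matrix.smul_apply]

lemma nilpotent_of_specRad_zero (B : Matrix S S ℝ) (h : specRad B ≤ 0) :
    B ^ (Fintype.card S) = 0 := by
  set a : Matrix S S ℂ := B.map Complex.ofReal with hadef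
  have hspec : ∀ z ∈ spectrum ℂ a, z = 0 := by
    intro z hz
    have h1 : ‖z‖ ≤ 0 := (spec_abs_le hz).trans h
    have h2 : ‖z‖ = 0 := le_antisymm h1 (by positivity)
    exact norm_eq_zero.mp h2
  have heval : ∀ x : ℂ, a.charpoly.eval x = (Matrix.scalar S x - a).det := by
    intro x
    rw [Matrix.charpoly, eval_det, matPolyEquiv_charmatrix]
    rw [Polynomial.eval_sub, Polynomial.eval_X, Polynomial.eval_C]
  have hroot : ∀ x ∈ a.charpoly.roots, x = 0 := by
    intro x hx
    apply hspec
    have hx0 : a.charpoly.eval x = 0 := Polynomial.IsRoot.eq_zero (Polynomial.isRoot_of_mem_roots hx)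
    rw [heval] at hx0
    rw [spectrum.mem_iff]
    intro hu
    rw [Algebra.algebraMap_eq_smul_one, ← scalar_eq_smul_one] at hu
    rw [Matrix.isUnit_iff_isUnit_det, hx0] at hu
    exact (not_isUnit_zero : ¬IsUnit (0 : ℂ)) hu
  have hmonic := a.charpoly_monic
  have hsplits : a.charpoly.Splits := IsAlgClosed.splits _
  have hdeg : a.charpoly.natDegree = Fintype.card S := a.charpoly_natDegree_eq_dim
  have hcard : a.charpoly.roots.card = Fintype.card S := by
    rw [← hdeg]
    exact (Polynomial.splits_iff_card_roots.mp hsplits)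
  have hrootsrep : a.charpoly.roots = Multiset.replicate (Fintype.card S) 0 := by
    rw [Multiset.eq_replicate]
    exact ⟨hcard, hroot⟩
  have hchar : a.charpoly = Polynomial.X ^ (Fintype.card S) := by
    have := hsplits.eq_prod_roots_of_monic hmonic
    rw [hrootsrep] at this
    simpa [Multiset.map_replicate, Multiset.prod_replicate] using this
  have haev : a ^ (Fintype.card S) = 0 := by
    have := a.aeval_self_charpoly
    rw [hchar] at this
    simpa using this
  have : (B ^ (Fintype.card S)).map Complex.ofReal = 0 := by
    rw [← map_ofReal_pow, haev]
  ext i j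
  have := congrFun (congrFun this i) j
  simp only [Matrix.map_apply, Matrix.zero_apply] at this ⊢
  exact_mod_cast this

lemma exists_left_null (B : Matrix S S ℝ) (hB : ∀ i j, 0 ≤ B i j)
    (h : B ^ (Fintype.card S) = 0) :
    ∃ f : S → ℝ, (∀ s, 0 ≤ f s) ∧ f ≠ 0 ∧ f ᵥ* B = 0 := by
  have hex : ∃ m : ℕ, B ^ m = 0 := ⟨_, h⟩
  set m := Nat.find hex with hmdef
  have hm0 : B ^ m = 0 := Nat.find_spec hex
  have hm1 : 1 ≤ m := by
    rcases Nat.eq_zero_or_pos m with h0 | h0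
    · exfalso
      have := hm0
      rw [h0, pow_zero] at this
      exact one_ne_zero this
    · exact h0
  set k := m - 1 with hkdef
  have hkm : k + 1 = m := Nat.succ_pred_eq_of_pos hm1
  have hBk : B ^ k ≠ 0 := Nat.find_min hex (by omega)
  have hBk1 : B ^ (k + 1) = 0 := by rw [hkm]; exact hm0
  set f : S → ℝ := (fun _ => (1 : ℝ)) ᵥ* (B ^ k) with hfdef
  have hfval : ∀ j, f j = ∑ i, (B ^ k) i j := by
    intro j
    simp [hfdef, Matrix.vecMul, dotProduct]
  refine ⟨f, ?_, ?_, ?_⟩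
  · intro j
    rw [hfval j]
    exact Finset.sum_nonneg fun i _ => pow_entry_nonneg hB k i j
  · intro hf0
    apply hBk
    ext i j
    have hj : f j = 0 := congrFun hf0 j
    rw [hfval j] at hj
    have := (Finset.sum_eq_zero_iff_of_nonneg
      (fun i _ => pow_entry_nonneg hB k i j)).mp hj i (Finset.mem_univ i)
    simpa using this
  · rw [hfdef, Matrix.vecMul_vecMul, ← pow_succ, hBk1, Matrix.vecMul_zero]

lemma vecMul_coord (v : S → ℝ) (M : Matrix S S ℝ) (j : S) :
    (v ᵥ* M) j = ∑ i, v i * M i j := by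
  simp [Matrix.vecMul, dotProduct]

lemma vecMul_smul_one_sub_coord (v : S → ℝ) (t : ℝ) (B : Matrix S S ℝ) (j : S) :
    (v ᵥ* (t • (1 : Matrix S S ℝ) - B)) j = t * v j - ∑ i, v i * B i j := by
  rw [vecMul_coord]
  have h1 : ∀ i, v i * (t • (1 : Matrix S S ℝ) - B) i j
      = (if i = j then t * v i else 0) - v i * B i j := by
    intro i
    rw [Matrix.sub_apply, Matrix.smul_apply, Matrix.one_apply]
    by_cases h : i = j <;> simp [h] <;> ring
  rw [Finset.sum_congr rfl fun i _ => h1 i, Finset.sum_sub_distrib,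
    Finset.sum_ite_eq' Finset.univ j (fun i => t * v i)]
  simp [mul_comm]

lemma exists_left_eigen (B : Matrix S S ℝ) (hB : ∀ i j, 0 ≤ B i j) :
    ∃ f : S → ℝ, (∀ s, 0 ≤ f s) ∧ f ≠ 0 ∧ f ᵥ* B = specRad B • f := by
  set ρ := specRad B with hρdef
  have hρ0 : 0 ≤ ρ := specRad_nonneg B
  rcases eq_or_lt_of_le hρ0 with hzero | hpos
  · -- nilpotent case
    obtain ⟨f, hf0, hfne, hfB⟩ :=
      exists_left_null B hB (nilpotent_of_specRad_zero B (le_of_eq hzero.symm))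
    refine ⟨f, hf0, hfne, ?_⟩
    rw [hfB, ← hzero, zero_smul]
  · -- positive spectral radius
    set t : ℕ → ℝ := fun k => ρ + 1 / (k + 1) with htdef
    have ht : ∀ k : ℕ, ρ < t k := by
      intro k
      have h0 : (0:ℝ) < 1 / ((k : ℝ) + 1) := by positivity
      have he : t k = ρ + 1 / ((k : ℝ) + 1) := rfl
      rw [he]; linarith
    have hRk : ∀ k : ℕ, ∃ R : Matrix S S ℝ, (∀ i j, 0 ≤ R i j) ∧
        R * ((t k) • (1 : Matrix S S ℝ) - B) = 1 ∧
        (0 < ρ → 1 / (t k - ρ) ≤ ∑ i, ∑ j, R i j) := fun k => key_resolvent B hB (ht k)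
    choose R hRnn hRinv hRbig using hRk
    set u : ℕ → S → ℝ := fun k => (fun _ => (1 : ℝ)) ᵥ* R k with hudef
    have huval : ∀ k j, u k j = ∑ i, R k i j := by
      intro k j; simp [hudef, Matrix.vecMul, dotProduct]
    have hunn : ∀ k j, 0 ≤ u k j := by
      intro k j; rw [huval]; exact Finset.sum_nonneg fun i _ => hRnn k i j
    set sk : ℕ → ℝ := fun k => ∑ j, u k j with hskdef
    have hskval : ∀ k, sk k = ∑ i, ∑ j, R k i j := by
      intro k
      rw [hskdef]
      simp only
      rw [show (∑ j, u k j) = ∑ j, ∑ i, R k i j from Finset.sum_congr rfl fun j _ => huval k j]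
      rw [Finset.sum_comm]
    have hsk_big : ∀ k : ℕ, (k + 1 : ℝ) ≤ sk k := by
      intro k
      have h1 := hRbig k hpos
      have h2 : t k - ρ = 1 / (k + 1) := by rw [htdef]; ring
      rw [h2, one_div_one_div] at h1
      rw [hskval]; exact h1
    have hsk_pos : ∀ k, 0 < sk k := by
      intro k
      have := hsk_big k
      have : (0:ℝ) < k + 1 := by positivity
      linarith [hsk_big k]
    set f : ℕ → S → ℝ := fun k => (sk k)⁻¹ • u k with hfdef
    have hfnn : ∀ k j, 0 ≤ f k j := by
      intro k j
      exact mul_nonneg (inv_nonneg.mpr (hsk_pos k).le) (hunn k j)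
    have hfsum : ∀ k, ∑ j, f k j = 1 := by
      intro k
      rw [hfdef]
      simp only [Pi.smul_apply, smul_eq_mul]
      rw [← Finset.mul_sum]
      have hsk : (∑ i, u k i) = sk k := rfl
      rw [hsk, inv_mul_cancel₀ (hsk_pos k).ne']
    have hfle : ∀ k j, f k j ≤ 1 := by
      intro k j
      rw [← hfsum k]
      exact Finset.single_le_sum (f := fun j => f k j) (fun i _ => hfnn k i) (Finset.mem_univ j)
    -- key identity
    have hiden : ∀ k j, t k * f k j - ∑ i, f k i * B i j = (sk k)⁻¹ := by
      intro k j
      have h1 : u k ᵥ* ((t k) • (1 : Matrix S S ℝ) - B) = (fun _ => (1:ℝ)) := by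
        rw [hudef, Matrix.vecMul_vecMul, hRinv k, Matrix.vecMul_one]
      have h2 := congrFun h1 j
      rw [vecMul_smul_one_sub_coord] at h2
      have hf : ∀ i, f k i = (sk k)⁻¹ * u k i := fun i => rfl
      have hsum : ∑ i, f k i * B i j = (sk k)⁻¹ * ∑ i, u k i * B i j := by
        rw [Finset.mul_sum]
        exact Finset.sum_congr rfl fun i _ => by rw [hf i]; ring
      calc t k * f k j - ∑ i, f k i * B i j
          = (sk k)⁻¹ * (t k * u k j - ∑ i, u k i * B i j) := by
            rw [hsum, hf j]; ring
      _ = (sk k)⁻¹ * 1 := by rw [h2]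
      _ = (sk k)⁻¹ := mul_one _
    -- compactness
    set K : Set (S → ℝ) := {g | (∀ s, g s ∈ Set.Icc (0:ℝ) 1) ∧ ∑ s, g s = 1} with hKdef
    have hKcomp : IsCompact K := by
      have h1 : K = (Set.univ.pi fun _ : S => Set.Icc (0:ℝ) 1) ∩
          ((fun g : S → ℝ => ∑ s, g s) ⁻¹' {1}) := by
        ext g
        simp only [hKdef, Set.mem_setOf_eq, Set.mem_inter_iff, Set.mem_pi, Set.mem_univ,
          forall_true_left, Set.mem_preimage, Set.mem_singleton_iff, true_implies]
      rw [h1]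
      apply IsCompact.inter_right
      · exact isCompact_univ_pi fun _ => isCompact_Icc
      · exact (isClosed_singleton).preimage (by continuity)
    have hmem : ∀ k, f k ∈ K := fun k => ⟨fun s => ⟨hfnn k s, hfle k s⟩, hfsum k⟩
    obtain ⟨g, hgK, φ, hφmono, hφtend⟩ := hKcomp.tendsto_subseq hmem
    have hgcoord : ∀ j, Tendsto (fun k => f (φ k) j) atTop (𝓝 (g j)) := by
      intro j
      have := tendsto_pi_nhds.mp hφtend j
      exact this
    have htk : Tendsto (fun k => t (φ k)) atTop (𝓝 ρ) := by
      rw [htdef]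
      have h1 : Tendsto (fun k : ℕ => ρ + 1 / ((k : ℝ) + 1)) atTop (𝓝 (ρ + 0)) :=
        tendsto_const_nhds.add tendsto_one_div_add_atTop_nhds_zero_nat
      rw [add_zero] at h1
      exact h1.comp hφmono.tendsto_atTop
    have hsinv : Tendsto (fun k => (sk (φ k))⁻¹) atTop (𝓝 0) := by
      apply squeeze_zero (fun k => inv_nonneg.mpr (hsk_pos _).le)
        (g := fun k : ℕ => 1 / ((k:ℝ) + 1))
      · intro k
        rw [one_div]
        apply inv_anti₀ (by positivity)
        calc ((k : ℝ) + 1) ≤ (φ k : ℝ) + 1 := by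
              have hk : k ≤ φ k := hφmono.le_apply
              have hk' : (k : ℝ) ≤ (φ k : ℝ) := Nat.cast_le.mpr hk
              linarith
        _ ≤ sk (φ k) := hsk_big (φ k)
      · exact tendsto_one_div_add_atTop_nhds_zero_nat
    -- pass to the limit
    have heig : ∀ j, ρ * g j - ∑ i, g i * B i j = 0 := by
      intro j
      have hterm : Tendsto (fun k => t (φ k) * f (φ k) j - ∑ i, f (φ k) i * B i j) atTop
          (𝓝 (ρ * g j - ∑ i, g i * B i j)) := by
        apply Tendsto.sub
        · exact htk.mul (hgcoord j)
        · apply tendsto_finset_sum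
          intro i _
          exact (hgcoord i).mul_const (B i j)
      have hconst : (fun k => t (φ k) * f (φ k) j - ∑ i, f (φ k) i * B i j)
          = fun k => (sk (φ k))⁻¹ := by
        funext k; exact hiden (φ k) j
      rw [hconst] at hterm
      exact tendsto_nhds_unique hterm hsinv
    refine ⟨g, fun s => (hgK.1 s).1, ?_, ?_⟩
    · intro hg0
      have := hgK.2
      rw [hg0] at this
      simpa using this
    · funext j
      rw [vecMul_coord]
      have := heig j
      have h2 : ρ * g j = ∑ i, g i * B i j := by linarith
      rw [← h2]
      simp [hρdef, smul_eq_mul]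

lemma specRad_eventually_row_sum_le (M : Matrix S S ℝ) {r : ℝ} (hr : specRad M < r) :
    ∀ᶠ n : ℕ in Filter.atTop, ∀ s, ∑ j, |(M ^ n) s j| ≤ r ^ n := by
  filter_upwards [specRad_eventually_norm_pow_le M hr] with n hn s
  exact (row_sum_abs_le_norm (M ^ n) s).trans hn

end Aux

theorem stmt5 {S : Type*} [Fintype S] [DecidableEq S] [Nonempty S]
    (P B : Matrix S S ℝ) (b : S → ℝ) (cl cu : ℝ)
    (hPnn : ∀ s s', 0 ≤ P s s')
    (hP1 : ∀ s, (P *ᵥ fun _ => (1 : ℝ)) s ≤ 1)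
    (hcl : 0 < cl) (hclcu : cl ≤ cu)
    (hBnn : ∀ s s', 0 ≤ B s s')
    (hBl : ∀ s s', cl * P s s' ≤ B s s')
    (hBu : ∀ s s', B s s' ≤ cu * P s s')
    (hbl : ∀ s, cl * ((((1 : Matrix S S ℝ) - P) *ᵥ fun _ => (1 : ℝ)) s) ≤ b s)
    (hbu : ∀ s, b s ≤ cu * ((((1 : Matrix S S ℝ) - P) *ᵥ fun _ => (1 : ℝ)) s))
    (hρP : specRad P < 1) :
    ∃ f : S → ℝ, (∀ s, 0 ≤ f s) ∧ f ≠ 0 ∧ f ᵥ* B = specRad B • f ∧ 0 < f ⬝ᵥ b := by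
  obtain ⟨f, hfnn, hfne, hfeig⟩ := exists_left_eigen B hBnn
  refine ⟨f, hfnn, hfne, hfeig, ?_⟩
  have hmvg : ∀ (v : S → ℝ) (s : S), (P *ᵥ v) s = ∑ j, P s j * v j := by
    intro v s; simp [Matrix.mulVec, dotProduct]
  set p : S → ℝ := fun s => 1 - ∑ j, P s j with hpdef
  have hpnn : ∀ s, 0 ≤ p s := by
    intro s
    have h1 := hP1 s
    rw [hmvg] at h1
    simp only [mul_one] at h1
    simp only [hpdef]
    linarith
  have hIP : ∀ s, (((1 : Matrix S S ℝ) - P) *ᵥ fun _ => (1:ℝ)) s = p s := by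
    intro s
    rw [Matrix.sub_mulVec]
    simp only [Pi.sub_apply, Matrix.one_mulVec, hmvg, mul_one, hpdef]
  have hblp : ∀ s, cl * p s ≤ b s := fun s => by have := hbl s; rwa [hIP] at this
  have heig : ∀ j, ∑ i, f i * B i j = specRad B * f j := by
    intro j
    have h := congrFun hfeig j
    rw [vecMul_coord] at h
    simpa [smul_eq_mul] using h
  have hkey : 0 < ∑ s, f s * p s := by
    by_contra hcon
    push_neg at hcon
    have hnn : ∀ s ∈ Finset.univ, 0 ≤ f s * p s :=
      fun s _ => mul_nonneg (hfnn s) (hpnn s)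
    have hle : ∑ s, f s * p s = 0 := le_antisymm hcon (Finset.sum_nonneg hnn)
    have hz : ∀ s, f s * p s = 0 := fun s =>
      (Finset.sum_eq_zero_iff_of_nonneg hnn).mp hle s (Finset.mem_univ s)
    have hfz : ∀ s, ¬ 0 < f s → f s = 0 := fun s hs => le_antisymm (not_lt.mp hs) (hfnn s)
    have hps : ∀ s, 0 < f s → ∑ j, P s j = 1 := by
      intro s hs
      have hp0 : p s = 0 := by
        rcases mul_eq_zero.mp (hz s) with h | h
        · exact absurd h (ne_of_gt hs)
        · exact h
      simp only [hpdef] at hp0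
      linarith
    have hPzero : ∀ s j, 0 < f s → f j = 0 → P s j = 0 := by
      intro s j hs hj
      have h1 : ∑ i, f i * B i j = 0 := by rw [heig j, hj, mul_zero]
      have h2 : f s * B s j = 0 :=
        (Finset.sum_eq_zero_iff_of_nonneg
          (fun i _ => mul_nonneg (hfnn i) (hBnn i j))).mp h1 s (Finset.mem_univ s)
      have hBz : B s j = 0 := by
        rcases mul_eq_zero.mp h2 with h | h
        · exact absurd h (ne_of_gt hs)
        · exact h
      have h3 := hBl s j
      rw [hBz] at h3
      nlinarith [hPnn s j]
    set g : S → ℝ := fun s => if 0 < f s then (1:ℝ) else 0 with hgdef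
    have hg0 : ∀ s, 0 ≤ g s := by
      intro s; rw [hgdef]; by_cases h : 0 < f s <;> simp [h]
    have hg1 : ∀ s, g s ≤ 1 := by
      intro s; rw [hgdef]; by_cases h : 0 < f s <;> simp [h]
    have hstep : ∀ s, g s ≤ (P *ᵥ g) s := by
      intro s
      rw [hmvg]
      by_cases hs : 0 < f s
      · have hsum : ∑ j, P s j * g j = ∑ j, P s j := by
          apply Finset.sum_congr rfl
          intro j _
          by_cases hj : 0 < f j
          · simp [hgdef, hj]
          · rw [hPzero s j hs (hfz j hj)]; simp
        rw [hsum, hps s hs]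
        simp [hgdef, hs]
      · have : g s = 0 := by simp [hgdef, hs]
        rw [this]
        exact Finset.sum_nonneg fun j _ => mul_nonneg (hPnn s j) (hg0 j)
    have hiter : ∀ n : ℕ, ∀ s, g s ≤ ((P ^ n) *ᵥ g) s := by
      intro n
      induction n with
      | zero => intro s; rw [pow_zero, Matrix.one_mulVec]
      | succ n ih =>
        intro s
        have hrw : (P ^ (n+1)) *ᵥ g = (P ^ n) *ᵥ (P *ᵥ g) := by
          rw [Matrix.mulVec_mulVec, ← pow_succ]
        rw [hrw]
        calc g s ≤ ((P ^ n) *ᵥ g) s := ih s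
        _ ≤ ((P ^ n) *ᵥ (P *ᵥ g)) s := by
            have e1 : ((P ^ n) *ᵥ g) s = ∑ j, (P ^ n) s j * g j := by
              simp [Matrix.mulVec, dotProduct]
            have e2 : ((P ^ n) *ᵥ (P *ᵥ g)) s = ∑ j, (P ^ n) s j * (P *ᵥ g) j := by
              simp [Matrix.mulVec, dotProduct]
            rw [e1, e2]
            apply Finset.sum_le_sum
            intro j _
            exact mul_le_mul_of_nonneg_left (hstep j) (pow_entry_nonneg hPnn n s j)
    obtain ⟨s0, hs0ne⟩ := Function.ne_iff.mp hfne
    have hs0 : 0 < f s0 := lt_of_le_of_ne (hfnn s0) (by simpa [eq_comm] using hs0ne)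
    have hgs0 : g s0 = 1 := by simp [hgdef, hs0]
    have hρPnn : 0 ≤ specRad P := specRad_nonneg P
    set r : ℝ := (specRad P + 1) / 2 with hrdef
    have hr1 : specRad P < r := by rw [hrdef]; linarith
    have hr2 : r < 1 := by rw [hrdef]; linarith
    have hr0 : 0 ≤ r := by rw [hrdef]; linarith
    have hev := specRad_eventually_row_sum_le P hr1
    have hrtend : Filter.Tendsto (fun n : ℕ => r ^ n) Filter.atTop (nhds 0) :=
      tendsto_pow_atTop_nhds_zero_of_lt_one hr0 hr2
    have hev2 : ∀ᶠ n : ℕ in Filter.atTop, r ^ n < 1 := hrtend.eventually_lt_const one_pos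
    obtain ⟨n, hn1, hn2⟩ := (hev.and hev2).exists
    have hb1 : ((P ^ n) *ᵥ g) s0 ≤ r ^ n := by
      have e1 : ((P ^ n) *ᵥ g) s0 = ∑ j, (P ^ n) s0 j * g j := by
        simp [Matrix.mulVec, dotProduct]
      rw [e1]
      calc ∑ j, (P ^ n) s0 j * g j ≤ ∑ j, (P ^ n) s0 j := by
            apply Finset.sum_le_sum
            intro j _
            have := mul_le_mul_of_nonneg_left (hg1 j) (pow_entry_nonneg hPnn n s0 j)
            rwa [mul_one] at this
      _ ≤ ∑ j, |(P ^ n) s0 j| := Finset.sum_le_sum fun j _ => le_abs_self _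
      _ ≤ r ^ n := hn1 s0
    have hcontr := hiter n s0
    rw [hgs0] at hcontr
    linarith
  have hdot : f ⬝ᵥ b = ∑ s, f s * b s := by simp [dotProduct]
  rw [hdot]
  have hlow : cl * ∑ s, f s * p s ≤ ∑ s, f s * b s := by
    rw [Finset.mul_sum]
    apply Finset.sum_le_sum
    intro s _
    calc cl * (f s * p s) = f s * (cl * p s) := by ring
    _ ≤ f s * b s := mul_le_mul_of_nonneg_left (hblp s) (hfnn s)
  have hpos : 0 < cl * ∑ s, f s * p s := mul_pos hcl hkey
  linarith
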